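/- arXiv:2102.11987 — 3 statements merged into one kernel-verified Lean document; each statement's English description precedes it below -/
import Mathlib

section
/- Let I = [T0,T], let g_k : I × ℝⁿ → ℝ for k = 1,…,m, and set C(t) := {x ∈ ℝⁿ : g_k(t,x) ≤ 0 for all k = 1,…,m}, assumed nonempty and closed for each t ∈ I. Assume there exists an extended real ρ ∈ (0,∞] such that: (1) for all t ∈ I and all k, the function g_k(t,·) is continuously differentiable on the open enlargement U_ρ(C(t)) := {y ∈ ℝⁿ : d_{C(t)}(y) < ρ}; (2) there exists γ > 0 such that for all t ∈ I, all k, and all x, y ∈ U_ρ(C(t)), ⟨∇g_k(t,·)(x) − ∇g_k(t,·)(y), x − y⟩ ≥ −γ·‖x − y‖²; (3) there exists δ > 0 such that for all (t,x) ∈ I × ℝⁿ with x in the boundary of C(t), there exists v̄ in the closed unit ball of ℝⁿ satisfying ⟨∇g_k(t,·)(x), v̄⟩ ≤ −δ for all k = 1,…,m. Then for all t ∈ I, the set C(t) is r-prox-regular with r = min{ρ, δ/γ}. -/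
open MeasureTheory Set
open scoped RealInnerProductSpace ENNReal Pointwise NNReal

noncomputable section

variable {H : Type*} [NormedAddCommGroup H] [InnerProductSpace ℝ H]

/-- The proximal normal cone of `S` at `x`. -/
def proxNormalCone (S : Set H) (x : H) : Set H :=
  {v | ∃ σ : ℝ, 0 ≤ σ ∧ ∃ δ : ℝ, 0 < δ ∧
    ∀ y ∈ S ∩ Metric.ball x δ, ⟪v, y - x⟫ ≤ σ * ‖y - x‖ ^ 2}

/-- Uniform `r`-prox-regularity, `r ∈ (0, ∞]`. -/
def IsProxRegular (r : ℝ≥0∞) (S : Set H) : Prop :=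
  ∀ x ∈ S, ∀ v ∈ proxNormalCone S x, v ≠ 0 →
    ∀ y ∈ S, ⟪‖v‖⁻¹ • v, y - x⟫ ≤ ((2 * r)⁻¹).toReal * ‖y - x‖ ^ 2

variable [CompleteSpace H]


open Filter
open scoped Topology

/-- eventually `x + s • w` is in any ball around `x`, for `s → 0⁺`. -/
lemma eventually_smul_mem_ball (x w : H) {ε : ℝ} (hε : 0 < ε) :
    ∀ᶠ s in 𝓝[>] (0:ℝ), x + s • w ∈ Metric.ball x ε := by
  have hT : Tendsto (fun s : ℝ => ‖s • w‖) (𝓝[>] (0:ℝ)) (𝓝 0) := by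
    have : Tendsto (fun s : ℝ => ‖s • w‖) (𝓝 (0:ℝ)) (𝓝 ‖(0:ℝ) • w‖) :=
      ((continuous_id.smul continuous_const).norm).tendsto 0
    simpa using this.mono_left nhdsWithin_le_nhds
  filter_upwards [hT (Iio_mem_nhds hε)] with s hs
  simpa [Metric.mem_ball, dist_eq_norm, add_sub_cancel_left] using hs

/-- Tangency: a proximal normal has nonpositive inner product with any direction
along which one eventually stays in `S`. -/
lemma prox_tangent {S : Set H} {x v : H} {σ δ' : ℝ} (hσ : 0 ≤ σ) (hδ' : 0 < δ')
    (hprox : ∀ y ∈ S ∩ Metric.ball x δ', ⟪v, y - x⟫ ≤ σ * ‖y - x‖ ^ 2)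
    (w : H) (hw : ∀ᶠ s in 𝓝[>] (0:ℝ), x + s • w ∈ S) : ⟪v, w⟫ ≤ 0 := by
  have hball := eventually_smul_mem_ball x w hδ'
  have hkey : ∀ᶠ s in 𝓝[>] (0:ℝ), ⟪v, w⟫ ≤ σ * s * ‖w‖ ^ 2 := by
    filter_upwards [hw, hball, self_mem_nhdsWithin] with s hsS hsb (hs : 0 < s)
    have h1 := hprox (x + s • w) ⟨hsS, hsb⟩
    rw [add_sub_cancel_left] at h1
    rw [real_inner_smul_right, norm_smul, Real.norm_eq_abs, abs_of_pos hs] at h1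
    have h2 : s * ⟪v, w⟫ ≤ σ * s ^ 2 * ‖w‖ ^ 2 := by nlinarith [h1]
    nlinarith [h2, hs]
  have hT : Tendsto (fun s : ℝ => σ * s * ‖w‖ ^ 2) (𝓝[>] (0:ℝ)) (𝓝 0) := by
    have : Tendsto (fun s : ℝ => σ * s * ‖w‖ ^ 2) (𝓝 (0:ℝ)) (𝓝 (σ * 0 * ‖w‖ ^ 2)) := by
      exact ((continuous_const.mul continuous_id).mul continuous_const).tendsto 0
    simpa using this.mono_left nhdsWithin_le_nhds
  exact ge_of_tendsto hT hkey

/-- A proximal normal at an interior point is zero. -/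
lemma proxNormal_interior_eq_zero {S : Set H} {x v : H}
    (hx : x ∈ interior S)
    (hv : ∃ σ : ℝ, 0 ≤ σ ∧ ∃ δ : ℝ, 0 < δ ∧
      ∀ y ∈ S ∩ Metric.ball x δ, ⟪v, y - x⟫ ≤ σ * ‖y - x‖ ^ 2) : v = 0 := by
  obtain ⟨σ, hσ, δ', hδ', hprox⟩ := hv
  obtain ⟨ε, hε, hball⟩ := Metric.isOpen_iff.1 isOpen_interior x hx
  have hmem : ∀ᶠ s in 𝓝[>] (0:ℝ), x + s • v ∈ S := by
    filter_upwards [eventually_smul_mem_ball x v hε] with s hs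
    exact interior_subset (hball hs)
  have h := prox_tangent hσ hδ' hprox v hmem
  have : ⟪v, v⟫ ≤ 0 := h
  simpa using le_antisymm this real_inner_self_nonneg

/-- Pure algebra: the Slater direction converts the tangency property into a
quantitative bound. -/
lemma cone_bound {m : ℕ} (v vb u : H) {δ c : ℝ} (hδ : 0 < δ) (hc : 0 ≤ c)
    (a : Fin m → H) (act : Fin m → Prop)
    (hvb : ‖vb‖ ≤ 1) (havb : ∀ k, ⟪a k, vb⟫ ≤ -δ)
    (hau : ∀ k, act k → ⟪a k, u⟫ ≤ c)
    (htan : ∀ w : H, (∀ k, act k → ⟪a k, w⟫ < 0) → ⟪v, w⟫ ≤ 0) :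
    ⟪v, u⟫ ≤ c / δ * ‖v‖ := by
  refine le_of_forall_pos_le_add (fun ε hε => ?_)
  obtain ⟨μ, hμ⟩ : ∃ μ : ℝ, μ = c / δ + ε / (‖v‖ + 1) := ⟨_, rfl⟩
  have hvnorm : (0:ℝ) ≤ ‖v‖ := norm_nonneg v
  have hμpos : 0 < μ := by rw [hμ]; positivity
  have hw := htan (u + μ • vb) (fun k hk => by
    have h1 := hau k hk
    have h2 := havb k
    have : ⟪a k, u + μ • vb⟫ = ⟪a k, u⟫ + μ * ⟪a k, vb⟫ := by
      rw [inner_add_right, real_inner_smul_right]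
    rw [this]
    have hμδ : μ * δ = c + ε / (‖v‖ + 1) * δ := by
      rw [hμ]; field_simp
    have hpos : 0 < ε / (‖v‖ + 1) * δ := by positivity
    nlinarith [mul_le_mul_of_nonneg_left h2 hμpos.le])
  have hsplit : ⟪v, u + μ • vb⟫ = ⟪v, u⟫ + μ * ⟪v, vb⟫ := by
    rw [inner_add_right, real_inner_smul_right]
  rw [hsplit] at hw
  have hinner : -⟪v, vb⟫ ≤ ‖v‖ := by
    have h1 := abs_real_inner_le_norm v vb
    have := abs_le.1 h1
    nlinarith [this.1, this.2]
  have hfrac : ε / (‖v‖ + 1) * ‖v‖ ≤ ε := by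
    rw [div_mul_eq_mul_div, div_le_iff₀ (by positivity)]
    nlinarith
  have hmul : μ * ‖v‖ = c / δ * ‖v‖ + ε / (‖v‖ + 1) * ‖v‖ := by rw [hμ]; ring
  nlinarith [mul_le_mul_of_nonneg_left hinner hμpos.le]

variable [CompleteSpace H]

/-- Hypomonotone gradient along a segment gives a semiconvexity inequality. -/
lemma seg_taylor {f : H → ℝ} {U : Set H}
    (hdiff : ∀ p ∈ U, DifferentiableAt ℝ f p)
    {γ : ℝ}
    (hmono : ∀ p ∈ U, ∀ q ∈ U, ⟪gradient f p - gradient f q, p - q⟫ ≥ -γ * ‖p - q‖ ^ 2)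
    {x y : H} (hseg : ∀ s ∈ Icc (0:ℝ) 1, x + s • (y - x) ∈ U) :
    ⟪gradient f x, y - x⟫ ≤ f y - f x + γ / 2 * ‖y - x‖ ^ 2 := by
  set u := y - x with hu
  set G : ℝ := ⟪gradient f x, u⟫ with hG
  set ψ : ℝ → ℝ := fun s => f (x + s • u) - s * G + γ * ‖u‖ ^ 2 / 2 * s ^ 2 with hψdef
  have hψ : ∀ s ∈ Icc (0:ℝ) 1,
      HasDerivAt ψ (⟪gradient f (x + s • u), u⟫ - G + γ * ‖u‖ ^ 2 * s) s := by
    intro s hs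
    have hline : HasDerivAt (fun s : ℝ => x + s • u) u s := by
      simpa using ((hasDerivAt_id s).smul_const u).const_add x
    have h1 : HasDerivAt (fun s : ℝ => f (x + s • u)) ⟪gradient f (x + s • u), u⟫ s := by
      have := ((hdiff _ (hseg s hs)).hasGradientAt.hasFDerivAt).comp_hasDerivAt s hline
      simpa [InnerProductSpace.toDual_apply_apply, Function.comp_def] using this
    have h2 : HasDerivAt (fun s : ℝ => s * G) G s := by
      simpa using (hasDerivAt_id s).mul_const G
    have h3 : HasDerivAt (fun s : ℝ => γ * ‖u‖ ^ 2 / 2 * s ^ 2)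
        (γ * ‖u‖ ^ 2 / 2 * (2 * s ^ 1)) s := (hasDerivAt_pow 2 s).const_mul _
    have h := (h1.sub h2).add h3
    exact h.congr_deriv (by ring)
  have hc : ContinuousOn ψ (Icc 0 1) := fun s hs => (hψ s hs).continuousAt.continuousWithinAt
  have hd : DifferentiableOn ℝ ψ (interior (Icc (0:ℝ) 1)) := fun s hs =>
    ((hψ s (interior_subset hs)).differentiableAt).differentiableWithinAt
  have hx0 : x + (0:ℝ) • u = x := by simp
  have hxU : x ∈ U := by simpa [hx0] using hseg 0 ⟨le_refl 0, zero_le_one⟩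
  have hd' : ∀ s ∈ interior (Icc (0:ℝ) 1), 0 ≤ deriv ψ s := by
    intro s hs
    rw [interior_Icc] at hs
    rw [(hψ s ⟨hs.1.le, hs.2.le⟩).deriv]
    have hm := hmono (x + s • u) (hseg s ⟨hs.1.le, hs.2.le⟩) x hxU
    rw [add_sub_cancel_left] at hm
    rw [real_inner_smul_right, norm_smul, Real.norm_eq_abs, abs_of_pos hs.1] at hm
    rw [inner_sub_left] at hm
    have hs1 := hs.1
    nlinarith [hm]
  have hmono01 := monotoneOn_of_deriv_nonneg (convex_Icc (0:ℝ) 1) hc hd hd'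
    (left_mem_Icc.2 zero_le_one) (right_mem_Icc.2 zero_le_one) zero_le_one
  have hψ0 : ψ 0 = f x := by simp [hψdef, hx0]
  have hψ1 : ψ 1 = f y - G + γ * ‖u‖ ^ 2 / 2 := by
    simp [hψdef, hu]
  rw [hψ0, hψ1] at hmono01
  linarith

/-- Strictly decreasing active constraints plus continuity of inactive ones keep us feasible. -/
lemma eventually_constraints_nonpos {m : ℕ} (f : Fin m → H → ℝ) {x w : H}
    (hdiff : ∀ k, DifferentiableAt ℝ (f k) x)
    (hle : ∀ k, f k x ≤ 0)
    (hact : ∀ k, f k x = 0 → ⟪gradient (f k) x, w⟫ < 0) :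
    ∀ᶠ s in 𝓝[>] (0:ℝ), ∀ k, f k (x + s • w) ≤ 0 := by
  rw [eventually_all]
  intro k
  have hx0 : x + (0:ℝ) • w = x := by simp
  rcases (hle k).lt_or_eq with hlt | heq
  · -- inactive constraint: continuity
    have hg : ContinuousAt (fun s : ℝ => x + s • w) 0 :=
      (continuous_const.add (continuous_id.smul continuous_const)).continuousAt
    have h0 : ContinuousAt (f k) (x + (0:ℝ) • w) := by
      rw [hx0]; exact (hdiff k).continuousAt
    have hc : ContinuousAt (fun s : ℝ => f k (x + s • w)) 0 := Tendsto.comp h0 hg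
    have hev : (fun s : ℝ => f k (x + s • w)) ⁻¹' (Iio 0) ∈ 𝓝 (0:ℝ) :=
      hc (Iio_mem_nhds (by simpa [hx0] using hlt))
    filter_upwards [nhdsWithin_le_nhds hev] with s hs
    exact (hs : _ < (0:ℝ)).le
  · -- active constraint
    have hL := hact k heq
    have hline : HasDerivAt (fun s : ℝ => x + s • w) w 0 := by
      simpa using ((hasDerivAt_id (0:ℝ)).smul_const w).const_add x
    have hg := (hdiff k).hasGradientAt.hasFDerivAt
    rw [← hx0] at hg
    have hfd : HasDerivAt (fun s : ℝ => f k (x + s • w)) ⟪gradient (f k) x, w⟫ 0 := by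
      simpa [InnerProductSpace.toDual_apply_apply, Function.comp_def] using hg.comp_hasDerivAt 0 hline
    have hslope := hasDerivAt_iff_tendsto_slope.mp hfd
    have hneg : (slope (fun s : ℝ => f k (x + s • w)) 0) ⁻¹' (Iio 0) ∈ 𝓝[≠] (0:ℝ) :=
      hslope (Iio_mem_nhds hL)
    have hmono : 𝓝[>] (0:ℝ) ≤ 𝓝[≠] (0:ℝ) :=
      nhdsWithin_mono 0 (fun s (hs : 0 < s) => Set.mem_compl_singleton_iff.mpr hs.ne')
    filter_upwards [hmono hneg, self_mem_nhdsWithin] with s hs (hspos : 0 < s)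
    have hsl : slope (fun s : ℝ => f k (x + s • w)) 0 s = f k (x + s • w) / s := by
      simp [slope, hx0, heq, div_eq_inv_mul]
    rw [mem_preimage, mem_Iio, hsl] at hs
    rcases div_neg_iff.mp hs with ⟨h1, h2⟩ | ⟨h1, h2⟩
    · linarith
    · linarith


/-- Theorem 5.1: prox-regularity of a moving set described by finitely many
inequality constraints. -/
theorem prox_regularity_of_inequality_constraints
    (T0 T : ℝ) (hT : T0 < T) (n m : ℕ)
    (g : Fin m → ℝ → EuclideanSpace ℝ (Fin n) → ℝ)
    (C : ℝ → Set (EuclideanSpace ℝ (Fin n)))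
    (hCdef : ∀ t ∈ Icc T0 T, C t = {x | ∀ k : Fin m, g k t x ≤ 0})
    (hCne : ∀ t ∈ Icc T0 T, (C t).Nonempty)
    (hCcl : ∀ t ∈ Icc T0 T, IsClosed (C t))
    (ρ : ℝ≥0∞) (hρ : 0 < ρ)
    (hdiff : ∀ t ∈ Icc T0 T, ∀ k : Fin m,
      ContDiffOn ℝ 1 (g k t) {y | ENNReal.ofReal (Metric.infDist y (C t)) < ρ})
    (γ : ℝ) (hγ : 0 < γ)
    (hhypo : ∀ t ∈ Icc T0 T, ∀ k : Fin m,
      ∀ x ∈ {y : EuclideanSpace ℝ (Fin n) | ENNReal.ofReal (Metric.infDist y (C t)) < ρ},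
      ∀ z ∈ {y : EuclideanSpace ℝ (Fin n) | ENNReal.ofReal (Metric.infDist y (C t)) < ρ},
        ⟪gradient (g k t) x - gradient (g k t) z, x - z⟫ ≥ -γ * ‖x - z‖ ^ 2)
    (δ : ℝ) (hδ : 0 < δ)
    (hslater : ∀ t ∈ Icc T0 T, ∀ x ∈ frontier (C t),
      ∃ v ∈ Metric.closedBall (0 : EuclideanSpace ℝ (Fin n)) 1,
        ∀ k : Fin m, ⟪gradient (g k t) x, v⟫ ≤ -δ) :
    ∀ t ∈ Icc T0 T, IsProxRegular (min ρ (ENNReal.ofReal (δ / γ))) (C t) := by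
  intro t ht x hxC v hv hv0 y hyC
  classical
  set U : Set (EuclideanSpace ℝ (Fin n)) :=
      {y | ENNReal.ofReal (Metric.infDist y (C t)) < ρ} with hUdef
  have hUopen : IsOpen U := by
    have hcont : Continuous fun y : EuclideanSpace ℝ (Fin n) =>
        ENNReal.ofReal (Metric.infDist y (C t)) :=
      ENNReal.continuous_ofReal.comp (Metric.continuous_infDist_pt (C t))
    exact isOpen_lt hcont continuous_const
  have hCU : C t ⊆ U := fun z hz => by
    simp only [hUdef, mem_setOf_eq, Metric.infDist_zero_of_mem hz, ENNReal.ofReal_zero]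
    exact hρ
  have hdiffAt : ∀ k, ∀ p ∈ U, DifferentiableAt ℝ (g k t) p := fun k p hp =>
    ((hdiff t ht k).differentiableOn one_ne_zero).differentiableAt (hUopen.mem_nhds hp)
  -- x is on the frontier
  have hxint : x ∉ interior (C t) := fun h => hv0 (proxNormal_interior_eq_zero h hv)
  have hxfr : x ∈ frontier (C t) := by
    rw [(hCcl t ht).frontier_eq]; exact ⟨hxC, hxint⟩
  obtain ⟨vb, hvbmem, hvb⟩ := hslater t ht x hxfr
  rw [mem_closedBall_zero_iff] at hvbmem
  obtain ⟨σ, hσ, δ', hδ', hprox⟩ := hv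
  -- numbers
  have hδγ : (0:ℝ) < δ / γ := div_pos hδ hγ
  set r : ℝ≥0∞ := min ρ (ENNReal.ofReal (δ / γ)) with hrdef
  have hrtop : r ≠ ∞ := ne_top_of_le_ne_top ENNReal.ofReal_ne_top (min_le_right _ _)
  have hr0 : r ≠ 0 := (lt_min hρ (ENNReal.ofReal_pos.mpr hδγ)).ne'
  set rr : ℝ := r.toReal with hrrdef
  have hrrpos : 0 < rr := ENNReal.toReal_pos hr0 hrtop
  have hrrδγ : rr ≤ δ / γ := by
    calc rr ≤ (ENNReal.ofReal (δ / γ)).toReal :=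
          ENNReal.toReal_mono ENNReal.ofReal_ne_top (min_le_right _ _)
      _ = δ / γ := ENNReal.toReal_ofReal hδγ.le
  have hR : ((2 * r)⁻¹).toReal = (2 * rr)⁻¹ := by
    rw [ENNReal.toReal_inv, ENNReal.toReal_mul, ← hrrdef]
    norm_num
  rw [hR, real_inner_smul_left]
  set u : EuclideanSpace ℝ (Fin n) := y - x with hu
  have hvn : (0:ℝ) < ‖v‖ := norm_pos_iff.mpr hv0
  rcases le_or_gt (2 * rr) ‖u‖ with hfar | hnear
  · -- far points: Cauchy-Schwarz suffices
    have hCS : ⟪v, u⟫ ≤ ‖v‖ * ‖u‖ := real_inner_le_norm v u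
    have h1 : ‖v‖⁻¹ * ⟪v, u⟫ ≤ ‖u‖ := by
      have h := mul_le_mul_of_nonneg_left hCS (inv_nonneg.mpr hvn.le)
      rwa [← mul_assoc, inv_mul_cancel₀ hvn.ne', one_mul] at h
    have h2 : ‖u‖ ≤ (2 * rr)⁻¹ * ‖u‖ ^ 2 := by
      rw [inv_mul_eq_div, le_div_iff₀ (by positivity)]
      nlinarith [norm_nonneg u]
    linarith
  · -- near points
    have hsegU : ∀ s ∈ Icc (0:ℝ) 1, x + s • u ∈ U := by
      intro s hs
      have hd2 : Metric.infDist (x + s • u) (C t) ≤ ‖u‖ / 2 := by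
        rcases le_or_gt s (1/2) with h12 | h12
        · have h := Metric.infDist_le_dist_of_mem (x := x + s • u) hxC
          have hdist : dist (x + s • u) x = s * ‖u‖ := by
            rw [dist_eq_norm, add_sub_cancel_left, norm_smul, Real.norm_eq_abs,
              abs_of_nonneg hs.1]
          rw [hdist] at h
          nlinarith [norm_nonneg u, hs.1]
        · have h := Metric.infDist_le_dist_of_mem (x := x + s • u) hyC
          have hyx : x + s • u - y = (s - 1) • u := by
            rw [sub_smul, one_smul, hu]; abel
          have hdist : dist (x + s • u) y = (1 - s) * ‖u‖ := by
            rw [dist_eq_norm, hyx, norm_smul, Real.norm_eq_abs,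
              abs_of_nonpos (by linarith [hs.2] : s - 1 ≤ 0)]
            ring
          rw [hdist] at h
          nlinarith [norm_nonneg u, hs.2]
      have hlt : Metric.infDist (x + s • u) (C t) < rr := lt_of_le_of_lt hd2 (by linarith)
      show ENNReal.ofReal (Metric.infDist (x + s • u) (C t)) < ρ
      calc ENNReal.ofReal (Metric.infDist (x + s • u) (C t)) < ENNReal.ofReal rr :=
            (ENNReal.ofReal_lt_ofReal_iff hrrpos).mpr hlt
        _ = r := by rw [hrrdef, ENNReal.ofReal_toReal hrtop]
        _ ≤ ρ := min_le_left _ _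
    have hxU : x ∈ U := hCU hxC
    have hgy : ∀ k, g k t y ≤ 0 := by
      have h := hyC; rw [hCdef t ht] at h; exact h
    have hgx : ∀ k, g k t x ≤ 0 := by
      have h := hxC; rw [hCdef t ht] at h; exact h
    have hact : ∀ k, g k t x = 0 → ⟪gradient (g k t) x, u⟫ ≤ γ / 2 * ‖u‖ ^ 2 := by
      intro k hk
      have h := seg_taylor (f := g k t) (U := U) (hdiffAt k) (hhypo t ht k) hsegU
      rw [hk] at h
      have hy0 := hgy k
      rw [← hu] at h
      linarith
    have htan : ∀ w : EuclideanSpace ℝ (Fin n),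
        (∀ k, g k t x = 0 → ⟪gradient (g k t) x, w⟫ < 0) → ⟪v, w⟫ ≤ 0 := by
      intro w hw
      refine prox_tangent hσ hδ' hprox w ?_
      have hmem := eventually_constraints_nonpos (fun k => g k t)
        (fun k => hdiffAt k x hxU) hgx hw
      filter_upwards [hmem] with s hs
      rw [hCdef t ht]; exact hs
    have hc : (0:ℝ) ≤ γ / 2 * ‖u‖ ^ 2 := by positivity
    have hkey := cone_bound v vb u hδ hc (fun k => gradient (g k t) x)
      (fun k => g k t x = 0) hvbmem hvb hact htan
    have hfin : γ / 2 * ‖u‖ ^ 2 / δ ≤ (2 * rr)⁻¹ * ‖u‖ ^ 2 := by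
      have h1 : rr * γ ≤ δ := (le_div_iff₀ hγ).mp hrrδγ
      have hrne : rr ≠ 0 := hrrpos.ne'
      have hnn : (0:ℝ) ≤ (2 * rr)⁻¹ * ‖u‖ ^ 2 := by positivity
      have h4 := mul_le_mul_of_nonneg_left h1 hnn
      have h5 : (2 * rr)⁻¹ * ‖u‖ ^ 2 * (rr * γ) = γ / 2 * ‖u‖ ^ 2 := by
        field_simp
      rw [div_le_iff₀ hδ]
      linarith [h4, h5]
    calc ‖v‖⁻¹ * ⟪v, u⟫ ≤ ‖v‖⁻¹ * (γ / 2 * ‖u‖ ^ 2 / δ * ‖v‖) :=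
          mul_le_mul_of_nonneg_left hkey (by positivity)
      _ = γ / 2 * ‖u‖ ^ 2 / δ := by field_simp
      _ ≤ (2 * rr)⁻¹ * ‖u‖ ^ 2 := hfin
end
end

section
/- Let I = [T0,T], let g_i : I × ℝⁿ → ℝ for i = 1,…,m, and set C(t) := {x ∈ ℝⁿ : g_i(t,x) ≤ 0 for all i = 1,…,m}, assumed nonempty, closed and r-prox-regular with a common constant r ∈ (0,∞] for every t ∈ I, with each g_i(t,·) continuously differentiable on U_r(C(t)) := {y ∈ ℝⁿ : d_{C(t)}(y) < r}. Assume there exist an absolutely continuous function w : I → ℝ, a real δ > 0 and a vector y ∈ ℝⁿ with ‖y‖ = 1 such that for each i = 1,…,m: g_i(t,x) ≤ g_i(s,x) + |w(t) − w(s)| for all s, t ∈ I and all x ∈ U_r(C(s)); and ⟨∇g_i(t,·)(x), y⟩ ≤ −δ for all t ∈ I and all x ∈ U_r(C(t)). Then, setting υ := δ^{-1}·w, one has C(s) ⊆ C(t) + |υ(t) − υ(s)|·B for all s, t ∈ I, where B is the closed unit ball of ℝⁿ; that is, C(·) has an absolutely continuous variation on I with modulus υ. -/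
open MeasureTheory Set
open scoped RealInnerProductSpace ENNReal Pointwise NNReal

noncomputable section

variable {H : Type*} [NormedAddCommGroup H] [InnerProductSpace ℝ H]

variable [CompleteSpace H]

/-- Proposition 5.2: sufficient conditions for the absolutely continuous
variation of a moving set described by inequality constraints. -/
theorem absolutely_continuous_variation_of_inequality_constraints
    (T0 T : ℝ) (hT : T0 < T) (n m : ℕ)
    (g : Fin m → ℝ → EuclideanSpace ℝ (Fin n) → ℝ)
    (C : ℝ → Set (EuclideanSpace ℝ (Fin n)))
    (hCdef : ∀ t ∈ Icc T0 T, C t = {x | ∀ i : Fin m, g i t x ≤ 0})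
    (r : ℝ≥0∞) (hr : 0 < r)
    (hC : ∀ t ∈ Icc T0 T, (C t).Nonempty ∧ IsClosed (C t) ∧ IsProxRegular r (C t))
    (hdiff : ∀ t ∈ Icc T0 T, ∀ i : Fin m,
      ContDiffOn ℝ 1 (g i t) {y | ENNReal.ofReal (Metric.infDist y (C t)) < r})
    (w w' : ℝ → ℝ)
    (hwint : IntervalIntegrable w' volume T0 T)
    (hwAC : ∀ t ∈ Icc T0 T, w t = w T0 + ∫ s in T0..t, w' s)
    (δ : ℝ) (hδ : 0 < δ)
    (y : EuclideanSpace ℝ (Fin n)) (hy : ‖y‖ = 1)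
    (hmono : ∀ i : Fin m, ∀ s ∈ Icc T0 T, ∀ t ∈ Icc T0 T,
      ∀ x : EuclideanSpace ℝ (Fin n), ENNReal.ofReal (Metric.infDist x (C s)) < r →
        g i t x ≤ g i s x + |w t - w s|)
    (hgrad : ∀ i : Fin m, ∀ t ∈ Icc T0 T,
      ∀ x : EuclideanSpace ℝ (Fin n), ENNReal.ofReal (Metric.infDist x (C t)) < r →
        ⟪gradient (g i t) x, y⟫ ≤ -δ) :
    ∀ s ∈ Icc T0 T, ∀ t ∈ Icc T0 T,
      C s ⊆ C t + |δ⁻¹ * w t - δ⁻¹ * w s| • Metric.closedBall (0 : EuclideanSpace ℝ (Fin n)) 1 := by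
  -- `w` is continuous on the interval.
  have hwc : ContinuousOn w (Icc T0 T) := by
    have h1 : ContinuousOn (fun t => w T0 + ∫ s in T0..t, w' s) (Icc T0 T) := by
      apply continuousOn_const.add
      have := intervalIntegral.continuousOn_primitive_interval' (μ := volume) hwint
        left_mem_uIcc
      rwa [uIcc_of_le hT.le] at this
    exact h1.congr hwAC
  -- choose a positive real `c` with `ofReal c < r`.
  obtain ⟨c, hc0, hcr⟩ : ∃ c : ℝ, 0 < c ∧ ENNReal.ofReal c < r := by
    rcases ENNReal.lt_iff_exists_real_btwn.mp hr with ⟨c, -, hc1, hc2⟩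
    exact ⟨c, ENNReal.ofReal_pos.mp hc1, hc2⟩
  -- the single small step
  have step : ∀ s ∈ Icc T0 T, ∀ t ∈ Icc T0 T, ∀ x ∈ C s, |w t - w s| ≤ δ * c →
      x + (|w t - w s| / δ) • y ∈ C t := by
    intro s hs t ht x hx hbound
    set l : ℝ := |w t - w s| / δ with hl
    have hl0 : 0 ≤ l := div_nonneg (abs_nonneg _) hδ.le
    have hlc : l ≤ c := (div_le_iff₀' hδ).mpr hbound
    have hpath : ∀ τ ∈ Icc (0:ℝ) l,
        ENNReal.ofReal (Metric.infDist (x + τ • y) (C s)) < r := by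
      intro τ hτ
      have h1 : Metric.infDist (x + τ • y) (C s) ≤ τ := by
        calc Metric.infDist (x + τ • y) (C s) ≤ dist (x + τ • y) x :=
              Metric.infDist_le_dist_of_mem hx
          _ = τ := by
              simp [dist_eq_norm, norm_smul, hy, abs_of_nonneg hτ.1]
      calc ENNReal.ofReal (Metric.infDist (x + τ • y) (C s))
          ≤ ENNReal.ofReal c := ENNReal.ofReal_le_ofReal (h1.trans (hτ.2.trans hlc))
        _ < r := hcr
    have hUopen : IsOpen {z : EuclideanSpace ℝ (Fin n) |
        ENNReal.ofReal (Metric.infDist z (C s)) < r} := by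
      have : Continuous fun z : EuclideanSpace ℝ (Fin n) =>
          ENNReal.ofReal (Metric.infDist z (C s)) :=
        ENNReal.continuous_ofReal.comp (Metric.continuous_infDist_pt (C s))
      exact isOpen_Iio.preimage this
    have hxCs : ∀ i, g i s x ≤ 0 := by
      have := hx
      rwa [hCdef s hs] at this
    -- derivative facts along the path
    have hdAt : ∀ i : Fin m, ∀ τ ∈ Icc (0:ℝ) l,
        HasDerivAt (fun τ : ℝ => g i s (x + τ • y))
          (fderiv ℝ (g i s) (x + τ • y) y) τ := by
      intro i τ hτ
      have hd : DifferentiableAt ℝ (g i s) (x + τ • y) :=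
        (((hdiff s hs i).differentiableOn one_ne_zero).differentiableAt
          (hUopen.mem_nhds (hpath τ hτ)))
      have hcder : HasDerivAt (fun τ : ℝ => x + τ • y) y τ := by
        simpa using ((hasDerivAt_id τ).smul_const y).const_add x
      exact hd.hasFDerivAt.comp_hasDerivAt τ hcder
    have hderiv_le : ∀ i : Fin m, ∀ τ ∈ Icc (0:ℝ) l,
        fderiv ℝ (g i s) (x + τ • y) y ≤ -δ := by
      intro i τ hτ
      have h := hgrad i s hs (x + τ • y) (hpath τ hτ)
      rwa [gradient, InnerProductSpace.toDual_symm_apply] at h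
    have hg_end : ∀ i : Fin m, g i s (x + l • y) ≤ -(δ * l) := by
      intro i
      have hanti : AntitoneOn (fun τ : ℝ => g i s (x + τ • y) + δ * τ) (Icc 0 l) := by
        have hDA : ∀ τ ∈ Icc (0:ℝ) l,
            HasDerivAt (fun τ : ℝ => g i s (x + τ • y) + δ * τ)
              (fderiv ℝ (g i s) (x + τ • y) y + δ) τ := by
          intro τ hτ
          have h2 : HasDerivAt (fun τ : ℝ => δ * τ) δ τ := by
            simpa using (hasDerivAt_id τ).const_mul δ
          exact (hdAt i τ hτ).add h2
        apply antitoneOn_of_deriv_nonpos (convex_Icc 0 l)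
        · intro τ hτ
          exact (hDA τ hτ).continuousAt.continuousWithinAt
        · intro τ hτ
          rw [interior_Icc] at hτ
          exact (hDA τ (Ioo_subset_Icc_self hτ)).differentiableAt.differentiableWithinAt
        · intro τ hτ
          rw [interior_Icc] at hτ
          rw [(hDA τ (Ioo_subset_Icc_self hτ)).deriv]
          have := hderiv_le i τ (Ioo_subset_Icc_self hτ)
          linarith
      have h := hanti (left_mem_Icc.mpr hl0) (right_mem_Icc.mpr hl0) hl0
      simp only [zero_smul, add_zero, mul_zero] at h
      have hx0 := hxCs i
      linarith
    have hdl : δ * l = |w t - w s| := by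
      rw [hl]; field_simp [hδ.ne']
    rw [hCdef t ht]
    intro i
    have h1 := hmono i s hs t ht (x + l • y) (hpath l (right_mem_Icc.mpr hl0))
    have h2 := hg_end i
    rw [hdl] at h2
    linarith
  -- iterate the step by bisection
  have key : ∀ N : ℕ, ∀ s ∈ Icc T0 T, ∀ t ∈ Icc T0 T, ∀ x ∈ C s,
      |w t - w s| ≤ 2 ^ N * (δ * c) → x + (|w t - w s| / δ) • y ∈ C t := by
    intro N
    induction N with
    | zero => intro s hs t ht x hx hb; exact step s hs t ht x hx (by simpa using hb)
    | succ N ih =>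
      intro s hs t ht x hx hb
      have huIcc : uIcc s t ⊆ Icc T0 T := by
        rw [uIcc_eq_union]
        exact union_subset (Icc_subset_Icc hs.1 ht.2) (Icc_subset_Icc ht.1 hs.2)
      obtain ⟨u, hu_mem, hu⟩ : ∃ u ∈ uIcc s t, w u = (w s + w t) / 2 := by
        have hcont : ContinuousOn w (uIcc s t) := hwc.mono huIcc
        have hmid : (w s + w t) / 2 ∈ uIcc (w s) (w t) := by
          rcases le_total (w s) (w t) with h | h
          · rw [uIcc_of_le h]; constructor <;> linarith
          · rw [uIcc_of_ge h]; constructor <;> linarith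
        obtain ⟨u, hu1, hu2⟩ := intermediate_value_uIcc hcont hmid
        exact ⟨u, hu1, hu2⟩
      have huI : u ∈ Icc T0 T := huIcc hu_mem
      have h1 : |w u - w s| = |w t - w s| / 2 := by
        have : w u - w s = (w t - w s) / 2 := by rw [hu]; ring
        rw [this, abs_div]
        norm_num
      have h2 : |w t - w u| = |w t - w s| / 2 := by
        have : w t - w u = (w t - w s) / 2 := by rw [hu]; ring
        rw [this, abs_div]
        norm_num
      have hb1 : |w u - w s| ≤ 2 ^ N * (δ * c) := by
        rw [h1]; rw [pow_succ] at hb; linarith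
      have hb2 : |w t - w u| ≤ 2 ^ N * (δ * c) := by
        rw [h2]; rw [pow_succ] at hb; linarith
      have hx1 := ih s hs u huI x hx hb1
      have hx2 := ih u huI t ht _ hx1 hb2
      have heq : x + (|w u - w s| / δ) • y + (|w t - w u| / δ) • y
          = x + (|w t - w s| / δ) • y := by
        rw [add_assoc, ← add_smul, h1, h2]
        ring_nf
      rwa [heq] at hx2
  -- conclude
  intro s hs t ht x hx
  obtain ⟨N, hN⟩ : ∃ N : ℕ, |w t - w s| ≤ 2 ^ N * (δ * c) := by
    obtain ⟨N, hN⟩ := pow_unbounded_of_one_lt (|w t - w s| / (δ * c)) (one_lt_two (α := ℝ))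
    refine ⟨N, ?_⟩
    have hδc : 0 < δ * c := mul_pos hδ hc0
    calc |w t - w s| = |w t - w s| / (δ * c) * (δ * c) := by field_simp
      _ ≤ 2 ^ N * (δ * c) := by
          apply mul_le_mul_of_nonneg_right hN.le hδc.le
  have hmem := key N s hs t ht x hx hN
  set l : ℝ := |w t - w s| / δ with hl
  have habs : |δ⁻¹ * w t - δ⁻¹ * w s| = l := by
    rw [hl, ← mul_sub, abs_mul, abs_of_pos (inv_pos.mpr hδ)]
    field_simp
  rw [Set.mem_add]
  refine ⟨x + l • y, hmem, -(l • y), ?_, by abel⟩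
  rw [habs]
  refine ⟨-y, ?_, by simp⟩
  simp [hy]
end
end

section
/- Let S be a nonempty closed subset of a real Hilbert space H which is r-prox-regular for some r ∈ (0,∞]. Then for any x ∈ S and any proximal subgradient ς ∈ ∂^P d_S(x), one has ⟨ς, y − x⟩ ≤ (2/r)·‖y − x‖² + d_S(y) for every y ∈ H with d_S(y) < r. -/
open MeasureTheory Set
open scoped RealInnerProductSpace ENNReal Pointwise NNReal

noncomputable section

variable {H : Type*} [NormedAddCommGroup H] [InnerProductSpace ℝ H]

variable [CompleteSpace H]

/-- Proposition 2.4(a): estimate for proximal subgradients of the distance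
function of a prox-regular set. -/
theorem proxRegular_distance_subgradient_estimate
    (S : Set H) (hS : S.Nonempty) (hScl : IsClosed S)
    (r : ℝ≥0∞) (hr : 0 < r) (hreg : IsProxRegular r S)
    (x : H) (hx : x ∈ S) (ς : H)
    (hς : ∃ σ : ℝ, 0 ≤ σ ∧ ∃ δ : ℝ, 0 < δ ∧ ∀ y ∈ Metric.ball x δ,
      ⟪ς, y - x⟫ ≤ Metric.infDist y S - Metric.infDist x S + σ * ‖y - x‖ ^ 2) :
    ∀ y : H, ENNReal.ofReal (Metric.infDist y S) < r →
      ⟪ς, y - x⟫ ≤ 2 * (r⁻¹).toReal * ‖y - x‖ ^ 2 + Metric.infDist y S := by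
  obtain ⟨σ, hσ, δ, hδ, hsub⟩ := hς
  have hdx : Metric.infDist x S = 0 := Metric.infDist_zero_of_mem hx
  set c : ℝ := ((2 * r)⁻¹).toReal with hc
  have hc0 : 0 ≤ c := ENNReal.toReal_nonneg
  -- ‖ς‖ ≤ 1
  have hnorm : ‖ς‖ ≤ 1 := by
    rcases eq_or_ne ς 0 with h | h
    · simp [h]
    have hςpos : 0 < ‖ς‖ := norm_pos_iff.mpr h
    have hb : ∀ t : ℝ, 0 < t → t < δ / ‖ς‖ →
        ‖ς‖ ^ 2 ≤ ‖ς‖ + σ * t * ‖ς‖ ^ 2 := by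
      intro t ht htδ
      have hy : x + t • ς ∈ Metric.ball x δ := by
        have : dist (x + t • ς) x = t * ‖ς‖ := by
          simp [dist_eq_norm, norm_smul, abs_of_pos ht]
        rw [Metric.mem_ball, this]
        calc t * ‖ς‖ < (δ / ‖ς‖) * ‖ς‖ := by
              exact mul_lt_mul_of_pos_right htδ hςpos
          _ = δ := by field_simp
      have h1 := hsub _ hy
      have h2 : Metric.infDist (x + t • ς) S ≤ t * ‖ς‖ := by
        calc Metric.infDist (x + t • ς) S ≤ dist (x + t • ς) x :=
              Metric.infDist_le_dist_of_mem hx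
          _ = t * ‖ς‖ := by simp [dist_eq_norm, norm_smul, abs_of_pos ht]
      have h3 : x + t • ς - x = t • ς := by abel
      rw [h3, real_inner_smul_right, real_inner_self_eq_norm_sq] at h1
      have h4 : ‖t • ς‖ ^ 2 = t ^ 2 * ‖ς‖ ^ 2 := by
        rw [norm_smul, Real.norm_eq_abs, abs_of_pos ht]; ring
      rw [h4] at h1
      have := h1.trans (by linarith : Metric.infDist (x + t • ς) S -
        Metric.infDist x S + σ * (t ^ 2 * ‖ς‖ ^ 2) ≤ t * ‖ς‖ + σ * t ^ 2 * ‖ς‖ ^ 2)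
      nlinarith [this, ht]
    have hδς : 0 < δ / ‖ς‖ := div_pos hδ hςpos
    have hev : ∀ᶠ t in nhdsWithin (0 : ℝ) (Set.Ioi 0),
        ‖ς‖ ^ 2 ≤ ‖ς‖ + σ * t * ‖ς‖ ^ 2 := by
      filter_upwards [Ioo_mem_nhdsGT_of_mem (Set.mem_Ico.mpr ⟨le_refl 0, hδς⟩)]
        with t ht
      exact hb t ht.1 ht.2
    have htend : Filter.Tendsto (fun t : ℝ => ‖ς‖ + σ * t * ‖ς‖ ^ 2)
        (nhdsWithin (0 : ℝ) (Set.Ioi 0)) (nhds (‖ς‖ + σ * 0 * ‖ς‖ ^ 2)) := by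
      apply Filter.Tendsto.mono_left _ nhdsWithin_le_nhds
      exact (Continuous.tendsto (by continuity) 0)
    have hle : ‖ς‖ ^ 2 ≤ ‖ς‖ + σ * 0 * ‖ς‖ ^ 2 :=
      ge_of_tendsto htend hev
    nlinarith [hςpos]
  -- proximal normal cone membership
  have hmem : ς ∈ proxNormalCone S x := by
    refine ⟨σ, hσ, δ, hδ, fun z hz => ?_⟩
    have h1 := hsub z hz.2
    rw [Metric.infDist_zero_of_mem hz.1, hdx] at h1
    linarith
  -- key estimate on S
  have hkey : ∀ z ∈ S, ⟪ς, z - x⟫ ≤ c * ‖z - x‖ ^ 2 := by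
    rcases eq_or_ne ς 0 with h | h
    · intro z hz
      rw [h, inner_zero_left]
      positivity
    intro z hz
    have hςpos : 0 < ‖ς‖ := norm_pos_iff.mpr h
    have h1 := hreg x hx ς hmem h z hz
    rw [real_inner_smul_left] at h1
    have h2 := mul_le_mul_of_nonneg_left h1 hςpos.le
    rw [← mul_assoc, mul_inv_cancel₀ hςpos.ne', one_mul] at h2
    have hq : 0 ≤ c * ‖z - x‖ ^ 2 := by positivity
    calc ⟪ς, z - x⟫ ≤ ‖ς‖ * (c * ‖z - x‖ ^ 2) := h2
      _ ≤ 1 * (c * ‖z - x‖ ^ 2) := mul_le_mul_of_nonneg_right hnorm hq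
      _ = c * ‖z - x‖ ^ 2 := one_mul _
  -- final
  intro y _
  set d := Metric.infDist y S with hdd
  have hd0 : 0 ≤ d := Metric.infDist_nonneg
  set R := ‖y - x‖ with hR
  have hdR : d ≤ R := by
    rw [hdd, hR, ← dist_eq_norm]
    exact Metric.infDist_le_dist_of_mem hx
  have key2 : ∀ ε : ℝ, 0 < ε → ⟪ς, y - x⟫ ≤ d + ε + c * (2 * R + ε) ^ 2 := by
    intro ε hε
    obtain ⟨z, hzS, hz⟩ := (Metric.infDist_lt_iff hS).mp
      (by linarith : Metric.infDist y S < d + ε)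
    have hsplit : (y - z) + (z - x) = y - x := by abel
    have h1 : ⟪ς, y - x⟫ = ⟪ς, y - z⟫ + ⟪ς, z - x⟫ := by
      rw [← hsplit, inner_add_right]
    have h2 : ⟪ς, y - z⟫ ≤ d + ε := by
      calc ⟪ς, y - z⟫ ≤ ‖ς‖ * ‖y - z‖ := real_inner_le_norm ς (y - z)
        _ ≤ 1 * ‖y - z‖ := mul_le_mul_of_nonneg_right hnorm (norm_nonneg _)
        _ = dist y z := by rw [one_mul, dist_eq_norm]
        _ ≤ d + ε := hz.le
    have hRz : ‖z - x‖ ≤ 2 * R + ε := by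
      calc ‖z - x‖ = ‖(z - y) + (y - x)‖ := by abel_nf
        _ ≤ ‖z - y‖ + ‖y - x‖ := norm_add_le _ _
        _ = dist y z + R := by rw [hR, dist_eq_norm, ← norm_neg (y - z)]; congr 1; abel
        _ ≤ (d + ε) + R := by linarith [hz.le]
        _ ≤ 2 * R + ε := by linarith
    have h3 : ⟪ς, z - x⟫ ≤ c * (2 * R + ε) ^ 2 := by
      refine (hkey z hzS).trans ?_
      have : ‖z - x‖ ^ 2 ≤ (2 * R + ε) ^ 2 := by
        apply pow_le_pow_left₀ (norm_nonneg _) hRz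
      exact mul_le_mul_of_nonneg_left this hc0
    linarith [h1, h2, h3]
  have htend : Filter.Tendsto (fun ε : ℝ => d + ε + c * (2 * R + ε) ^ 2)
      (nhdsWithin (0 : ℝ) (Set.Ioi 0)) (nhds (d + 0 + c * (2 * R + 0) ^ 2)) := by
    apply Filter.Tendsto.mono_left _ nhdsWithin_le_nhds
    exact (Continuous.tendsto (by continuity) 0)
  have hev : ∀ᶠ ε in nhdsWithin (0 : ℝ) (Set.Ioi 0),
      ⟪ς, y - x⟫ ≤ d + ε + c * (2 * R + ε) ^ 2 :=
    eventually_nhdsWithin_of_forall (fun ε hε => key2 ε hε)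
  have hfin : ⟪ς, y - x⟫ ≤ d + 0 + c * (2 * R + 0) ^ 2 :=
    ge_of_tendsto htend hev
  have hcoef : 4 * c = 2 * (r⁻¹).toReal := by
    rw [hc, ENNReal.toReal_inv, ENNReal.toReal_inv, ENNReal.toReal_mul]
    norm_num [mul_inv]
    ring
  nlinarith [hfin]
end
end
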